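/- Let A ∈ ℂ^{N_d×N} have unit ℓ²-norm columns and B ∈ ℂ^{N×N_s} be such that the columns of B^* have unit ℓ² norm, let Γ ∈ ℂ^{N×N}, and let V and V_n be N×N diagonal matrices, each with at most s nonzero diagonal entries, with diagonal vectors v and v_n. Set δ = ‖VΓ‖_max, γ = ‖VΓ‖₁ and γ_n = ‖V_nΓ‖₁, and suppose γ < 1 and I − VΓ is invertible. Then max_j | [ (I + V_nΓ)^* A^*A ( (I−VΓ)^{-1} − (I+VΓ) ) V B B^* ]_{jj} | ≤ (1+γ_n) (1 + (s−1)μ(A)) (1 + (s−1)μ(B^*)) · (δγ/(1−γ)) · ‖v‖_∞. -/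

import Mathlib

open Matrix Finset Filter

noncomputable section

/-- A vector is `s`-sparse if it has at most `s` nonzero entries. -/
def sparse {n : Type*} (s : ℕ) (x : n → ℂ) : Prop := {i | x i ≠ 0}.ncard ≤ s

/-- The ℓ² norm of the `j`-th column of a matrix. -/
def colNorm {m n : Type*} [Fintype m] (A : Matrix m n ℂ) (j : n) : ℝ :=
  Real.sqrt (∑ i, ‖A i j‖ ^ 2)

/-- The mutual coherence of a matrix:
`μ(A) = max_{j ≠ k} |⟨A_j, A_k⟩| / (‖A_j‖₂ ‖A_k‖₂)`. -/
def coherence {m n : Type*} [Fintype m] [Fintype n] (A : Matrix m n ℂ) : ℝ :=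
  sSup {r : ℝ | ∃ j k, j ≠ k ∧ r = ‖(Aᴴ * A) j k‖ / (colNorm A j * colNorm A k)}

/-- The ℓ¹ norm of a vector. -/
def l1 {n : Type*} [Fintype n] (x : n → ℂ) : ℝ := ∑ i, ‖x i‖

/-- The ℓ^∞ norm of a vector. -/
def linf {n : Type*} [Fintype n] (x : n → ℂ) : ℝ := ⨆ i, ‖x i‖

/-- The squared ℓ² norm of a vector. -/
def l2sq {n : Type*} [Fintype n] (x : n → ℂ) : ℝ := ∑ i, ‖x i‖ ^ 2

/-- The entrywise max norm of a matrix, `‖M‖_max = max_{i,j} |M_{ij}|`. -/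
def maxNorm {m n : Type*} [Fintype m] [Fintype n] (A : Matrix m n ℂ) : ℝ :=
  ⨆ p : m × n, ‖A p.1 p.2‖

/-- The induced ℓ¹ matrix norm (maximum absolute column sum). -/
def matL1 {m n : Type*} [Fintype m] [Fintype n] (A : Matrix m n ℂ) : ℝ :=
  ⨆ j, ∑ i, ‖A i j‖

/-- `x` is a hard thresholding `H_s(z)` of `z`: it agrees with `z` on an
index set `I` of size `s` consisting of entries of largest modulus, and
vanishes outside `I`. -/
def IsHardThreshold {n : Type*} [Fintype n] (s : ℕ) (z x : n → ℂ) : Prop :=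
  ∃ I : Finset n, I.card = s ∧ (∀ i ∈ I, ∀ j ∉ I, ‖z j‖ ≤ ‖z i‖) ∧
    (∀ i ∈ I, x i = z i) ∧ (∀ i ∉ I, x i = 0)

/-- `A` satisfies the restricted isometry property of order `t` with constant `δ`. -/
def SatisfiesRIP {m n : Type*} [Fintype m] [Fintype n] (A : Matrix m n ℂ) (t : ℕ) (δ : ℝ) :
    Prop :=
  0 < δ ∧ δ < 1 ∧ ∀ z : n → ℂ, sparse t z →
    (1 - δ) * l2sq z ≤ l2sq (A.mulVec z) ∧ l2sq (A.mulVec z) ≤ (1 + δ) * l2sq z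

/-- The spectral (operator ℓ²) norm of a square matrix. -/
def specNorm {n : Type*} [Fintype n] [DecidableEq n] (M : Matrix n n ℂ) : ℝ :=
  ‖Matrix.toEuclideanCLM (𝕜 := ℂ) M‖

/-! ### Auxiliary lemmas -/

section Aux

variable {m n p : Type*} [Fintype m] [Fintype n] [Fintype p]

lemma matL1_nonneg (A : Matrix m n ℂ) : 0 ≤ matL1 A :=
  Real.iSup_nonneg fun _ => Finset.sum_nonneg fun _ _ => norm_nonneg _

lemma colsum_le_matL1 (A : Matrix m n ℂ) (j : n) :
    ∑ i, ‖A i j‖ ≤ matL1 A :=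
  le_ciSup (f := fun j => ∑ i, ‖A i j‖) (Finite.bddAbove_range _) j

lemma colsum_mul_le (M : Matrix m n ℂ) (X : Matrix n p ℂ) (r : p) :
    ∑ t, ‖(M * X) t r‖ ≤ matL1 M * ∑ u, ‖X u r‖ := by
  calc ∑ t, ‖(M * X) t r‖ ≤ ∑ t, ∑ u, ‖M t u‖ * ‖X u r‖ := by
        refine Finset.sum_le_sum fun t _ => ?_
        rw [Matrix.mul_apply]
        exact (norm_sum_le _ _).trans (le_of_eq (by simp [norm_mul]))
    _ = ∑ u, (∑ t, ‖M t u‖) * ‖X u r‖ := by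
        rw [Finset.sum_comm]; simp [Finset.sum_mul]
    _ ≤ ∑ u, matL1 M * ‖X u r‖ := Finset.sum_le_sum fun u _ =>
        mul_le_mul_of_nonneg_right (colsum_le_matL1 M u) (norm_nonneg _)
    _ = matL1 M * ∑ u, ‖X u r‖ := by rw [Finset.mul_sum]

lemma colsum_inv_le {n : Type*} [Fintype n] [DecidableEq n]
    (W : Matrix n n ℂ) (hinv : IsUnit (1 - W)) (hγ : matL1 W < 1) (r : n) :
    ∑ t, ‖(1 - W)⁻¹ t r‖ ≤ 1 / (1 - matL1 W) := by
  set X := (1 - W)⁻¹ with hX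
  have hmul : (1 - W) * X = 1 :=
    Matrix.mul_nonsing_inv _ ((Matrix.isUnit_iff_isUnit_det _).mp hinv)
  have hXeq : X = 1 + W * X := by
    have h : X - W * X = 1 := by rw [Matrix.sub_mul, Matrix.one_mul] at hmul; exact hmul
    linear_combination (norm := module) h
  have h1 : ∑ t, ‖(1 : Matrix n n ℂ) t r‖ = 1 := by
    simp [Matrix.one_apply, apply_ite (‖·‖)]
  have key : ∑ t, ‖X t r‖ ≤ 1 + matL1 W * ∑ t, ‖X t r‖ := by
    calc ∑ t, ‖X t r‖ = ∑ t, ‖(1 + W * X) t r‖ := by rw [← hXeq]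
      _ ≤ ∑ t, (‖(1 : Matrix n n ℂ) t r‖ + ‖(W * X) t r‖) :=
          Finset.sum_le_sum fun t _ => norm_add_le _ _
      _ = 1 + ∑ t, ‖(W * X) t r‖ := by rw [Finset.sum_add_distrib, h1]
      _ ≤ 1 + matL1 W * ∑ t, ‖X t r‖ := by linarith [colsum_mul_le W X r]
  have hpos : 0 < 1 - matL1 W := by linarith
  rw [le_div_iff₀ hpos]
  nlinarith [Finset.sum_nonneg (fun t (_ : t ∈ Finset.univ) => norm_nonneg (X t r))]

variable (A : Matrix m n ℂ)

lemma gram_entry_le (hA : ∀ j, colNorm A j = 1) (j k : n) : ‖(Aᴴ * A) j k‖ ≤ 1 := by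
  have h1 : ∀ j : n, ∑ i, ‖A i j‖ ^ 2 = 1 := by
    intro j
    have := hA j
    rw [colNorm] at this
    nlinarith [Finset.sum_nonneg fun (i : m) (_ : i ∈ Finset.univ) => sq_nonneg ‖A i j‖,
      Real.sq_sqrt (Finset.sum_nonneg fun (i : m) (_ : i ∈ Finset.univ) => sq_nonneg ‖A i j‖)]
  calc ‖(Aᴴ * A) j k‖ ≤ ∑ i, ‖A i j‖ * ‖A i k‖ := by
        rw [Matrix.mul_apply]
        refine (norm_sum_le _ _).trans (Finset.sum_le_sum fun i _ => ?_)
        rw [Matrix.conjTranspose_apply, norm_mul, norm_star]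
    _ ≤ Real.sqrt (∑ i, ‖A i j‖ ^ 2) * Real.sqrt (∑ i, ‖A i k‖ ^ 2) :=
        Real.sum_mul_le_sqrt_mul_sqrt _ _ _
    _ = 1 := by rw [h1, h1, Real.sqrt_one, mul_one]

lemma gram_diag (hA : ∀ j, colNorm A j = 1) (j : n) : ‖(Aᴴ * A) j j‖ = 1 := by
  have h1 : ∑ i, ‖A i j‖ ^ 2 = 1 := by
    have := hA j
    rw [colNorm] at this
    nlinarith [Finset.sum_nonneg fun (i : m) (_ : i ∈ Finset.univ) => sq_nonneg ‖A i j‖,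
      Real.sq_sqrt (Finset.sum_nonneg fun (i : m) (_ : i ∈ Finset.univ) => sq_nonneg ‖A i j‖)]
  have h2 : (Aᴴ * A) j j = ((∑ i, ‖A i j‖ ^ 2 : ℝ) : ℂ) := by
    rw [Matrix.mul_apply]
    push_cast
    refine Finset.sum_congr rfl fun i _ => ?_
    rw [Matrix.conjTranspose_apply, Complex.star_def, ← Complex.normSq_eq_conj_mul_self,
      Complex.normSq_eq_norm_sq]
    norm_num
  rw [h2, h1]; norm_num

lemma gram_norm_symm (j k : n) : ‖(Aᴴ * A) j k‖ = ‖(Aᴴ * A) k j‖ := by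
  conv_lhs => rw [show (Aᴴ * A) = (Aᴴ * A)ᴴ by
    rw [Matrix.conjTranspose_mul, Matrix.conjTranspose_conjTranspose]]
  rw [Matrix.conjTranspose_apply, norm_star]

lemma coherence_nonneg : 0 ≤ coherence A := by
  refine Real.sSup_nonneg ?_
  rintro r ⟨j, k, hjk, rfl⟩
  exact div_nonneg (norm_nonneg _) (mul_nonneg (Real.sqrt_nonneg _) (Real.sqrt_nonneg _))

lemma coherence_le_one (hA : ∀ j, colNorm A j = 1) : coherence A ≤ 1 := by
  refine Real.sSup_le ?_ zero_le_one
  rintro r ⟨j, k, hjk, rfl⟩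
  rw [hA, hA, mul_one, div_one]
  exact gram_entry_le A hA j k

lemma le_coherence (hA : ∀ j, colNorm A j = 1) {j k : n} (hjk : j ≠ k) :
    ‖(Aᴴ * A) j k‖ ≤ coherence A := by
  have hb : BddAbove {r : ℝ | ∃ j k, j ≠ k ∧ r = ‖(Aᴴ * A) j k‖ / (colNorm A j * colNorm A k)} := by
    refine ⟨1, ?_⟩
    rintro r ⟨j, k, hjk, rfl⟩
    rw [hA, hA, mul_one, div_one]
    exact gram_entry_le A hA j k
  have h : ‖(Aᴴ * A) j k‖ = ‖(Aᴴ * A) j k‖ / (colNorm A j * colNorm A k) := by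
    rw [hA, hA, mul_one, div_one]
  rw [h]
  exact le_csSup hb ⟨j, k, hjk, rfl⟩

lemma colsum_gram_le [DecidableEq n] (hA : ∀ j, colNorm A j = 1) (s : ℕ) (S : Finset n)
    (hS : S.card ≤ s) (p : n) :
    ∑ q ∈ S, ‖(Aᴴ * A) p q‖ ≤ 1 + ((s : ℝ) - 1) * coherence A := by
  have hμ0 : 0 ≤ coherence A := coherence_nonneg A
  have hμ1 : coherence A ≤ 1 := coherence_le_one A hA
  by_cases hp : p ∈ S
  · have hcard : 1 ≤ S.card := Finset.card_pos.mpr ⟨p, hp⟩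
    have hsplit : ∑ q ∈ S, ‖(Aᴴ * A) p q‖
        = ‖(Aᴴ * A) p p‖ + ∑ q ∈ S.erase p, ‖(Aᴴ * A) p q‖ :=
      (Finset.add_sum_erase S _ hp).symm
    rw [hsplit, gram_diag A hA]
    have h2 : ∑ q ∈ S.erase p, ‖(Aᴴ * A) p q‖ ≤ ((S.erase p).card : ℝ) * coherence A := by
      have := Finset.sum_le_card_nsmul (S.erase p) (fun q => ‖(Aᴴ * A) p q‖) (coherence A)
        (fun q hq => le_coherence A hA (Ne.symm (Finset.ne_of_mem_erase hq)))
      rwa [nsmul_eq_mul] at this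
    have h3 : ((S.erase p).card : ℝ) ≤ (s : ℝ) - 1 := by
      rw [Finset.card_erase_of_mem hp, Nat.cast_sub hcard]
      push_cast
      have : (S.card : ℝ) ≤ s := Nat.cast_le.mpr hS
      linarith
    nlinarith [mul_le_mul_of_nonneg_right h3 hμ0]
  · have h2 : ∑ q ∈ S, ‖(Aᴴ * A) p q‖ ≤ (S.card : ℝ) * coherence A := by
      have := Finset.sum_le_card_nsmul S (fun q => ‖(Aᴴ * A) p q‖) (coherence A)
        (fun q hq => le_coherence A hA (fun h => hp (h ▸ hq)))
      rwa [nsmul_eq_mul] at this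
    have h3 : (S.card : ℝ) ≤ s := Nat.cast_le.mpr hS
    nlinarith [mul_le_mul_of_nonneg_right h3 hμ0]

lemma one_add_coh_nonneg (hA : ∀ j, colNorm A j = 1) (s : ℕ) :
    0 ≤ 1 + ((s : ℝ) - 1) * coherence A := by
  have hμ0 : 0 ≤ coherence A := coherence_nonneg A
  have hμ1 : coherence A ≤ 1 := coherence_le_one A hA
  have : (0:ℝ) ≤ s := Nat.cast_nonneg s
  nlinarith

end Aux

/-- Section 4.2: bound on the linearization error for the second Born approximation. -/
theorem secondBorn_linearization_error_bound {Nd Ns N : ℕ} (s : ℕ)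
    (A : Matrix (Fin Nd) (Fin N) ℂ) (hA : ∀ j, colNorm A j = 1)
    (B : Matrix (Fin N) (Fin Ns) ℂ) (hB : ∀ j, colNorm Bᴴ j = 1)
    (Γ : Matrix (Fin N) (Fin N) ℂ)
    (v vn : Fin N → ℂ) (hv : sparse s v) (hvn : sparse s vn)
    (δ γ γn : ℝ)
    (hδ : δ = maxNorm (Matrix.diagonal v * Γ))
    (hγ : γ = matL1 (Matrix.diagonal v * Γ)) (hγ1 : γ < 1)
    (hγn : γn = matL1 (Matrix.diagonal vn * Γ))
    (hinv : IsUnit (1 - Matrix.diagonal v * Γ)) :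
    (⨆ j, ‖(((1 + Matrix.diagonal vn * Γ)ᴴ * Aᴴ * A *
        ((1 - Matrix.diagonal v * Γ)⁻¹ - (1 + Matrix.diagonal v * Γ)) *
        Matrix.diagonal v * B * Bᴴ : Matrix (Fin N) (Fin N) ℂ)) j j‖) ≤
      (1 + γn) * (1 + ((s : ℝ) - 1) * coherence A) *
        (1 + ((s : ℝ) - 1) * coherence Bᴴ) * (δ * γ / (1 - γ)) * linf v := by
  classical
  rcases isEmpty_or_nonempty (Fin N) with hemp | hne
  · -- empty case : both sides are zero
    have hlinf : linf v = 0 := by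
      rw [linf, Real.iSup_of_isEmpty]
    rw [hlinf, mul_zero, Real.iSup_of_isEmpty]
  · -- main case
    set W : Matrix (Fin N) (Fin N) ℂ := Matrix.diagonal v * Γ with hW
    set Wn : Matrix (Fin N) (Fin N) ℂ := Matrix.diagonal vn * Γ with hWn
    set X : Matrix (Fin N) (Fin N) ℂ := (1 - W)⁻¹ with hXdef
    set E : Matrix (Fin N) (Fin N) ℂ := X - (1 + W) with hEdef
    -- nonnegativity facts
    have hδ0 : 0 ≤ δ := hδ ▸ Real.iSup_nonneg fun _ => norm_nonneg _
    have hγ0 : 0 ≤ γ := hγ ▸ matL1_nonneg _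
    have hγn0 : 0 ≤ γn := hγn ▸ matL1_nonneg _
    have hγpos : 0 < 1 - γ := by linarith
    have hlinf0 : 0 ≤ linf v := Real.iSup_nonneg fun _ => norm_nonneg _
    have hvle : ∀ i, ‖v i‖ ≤ linf v := fun i =>
      le_ciSup (f := fun i => ‖v i‖) (Finite.bddAbove_range _) i
    have hWmax : ∀ a b, ‖W a b‖ ≤ δ := fun a b => by
      rw [hδ]
      exact le_ciSup (f := fun p : Fin N × Fin N => ‖W p.1 p.2‖) (Finite.bddAbove_range _) (a, b)
    -- structure of E
    have hmulX : (1 - W) * X = 1 :=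
      Matrix.mul_nonsing_inv _ ((Matrix.isUnit_iff_isUnit_det _).mp hinv)
    have hE : E = W * (W * X) := by
      have h1 : (1 - W) * E = (1 - W) * (W * (W * X)) := by
        have lhs : (1 - W) * E = W * W - (1 - (1 - W) * X) := by
          rw [hEdef]; noncomm_ring
        have rhs : (1 - W) * (W * (W * X)) = W * (W * ((1 - W) * X)) := by noncomm_ring
        rw [lhs, rhs, hmulX, Matrix.mul_one]
        simp
      exact hinv.mul_left_cancel h1
    -- entrywise bound on E
    have hXcol : ∀ r, ∑ t, ‖X t r‖ ≤ 1 / (1 - γ) := fun r => by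
      rw [hγ]; exact colsum_inv_le W hinv (hγ ▸ hγ1) r
    have hME : ∀ q r, ‖E q r‖ ≤ δ * γ / (1 - γ) := by
      intro q r
      have h1 : ‖E q r‖ ≤ δ * ∑ t, ‖(W * X) t r‖ := by
        rw [hE, Matrix.mul_apply]
        refine (norm_sum_le _ _).trans ?_
        rw [Finset.mul_sum]
        refine Finset.sum_le_sum fun t _ => ?_
        rw [norm_mul]
        exact mul_le_mul_of_nonneg_right (hWmax q t) (norm_nonneg _) |>.trans
          (le_of_eq rfl)
      have h2 : ∑ t, ‖(W * X) t r‖ ≤ γ * (1 / (1 - γ)) := by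
        calc ∑ t, ‖(W * X) t r‖ ≤ matL1 W * ∑ u, ‖X u r‖ := colsum_mul_le W X r
          _ ≤ γ * (1 / (1 - γ)) := by
              rw [← hγ]
              exact mul_le_mul_of_nonneg_left (hXcol r) hγ0
      calc ‖E q r‖ ≤ δ * (γ * (1 / (1 - γ))) :=
            h1.trans (mul_le_mul_of_nonneg_left h2 hδ0)
        _ = δ * γ / (1 - γ) := by ring
    -- support of E
    have hEsupp : ∀ q r, v q = 0 → E q r = 0 := by
      intro q r hq
      rw [hE, Matrix.mul_apply]
      refine Finset.sum_eq_zero fun t _ => ?_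
      rw [hW, Matrix.diagonal_mul, hq, zero_mul, zero_mul]
    -- the support set
    set S : Finset (Fin N) := Finset.univ.filter (fun i => v i ≠ 0) with hSdef
    have hScard : S.card ≤ s := by
      have hco : (↑S : Set (Fin N)) = {i | v i ≠ 0} := by
        ext i; simp [hSdef]
      have h2 := Set.ncard_coe_finset S
      rw [hco] at h2
      have hv' : {i | v i ≠ 0}.ncard ≤ s := hv
      rwa [h2] at hv'
    have hmemS : ∀ i, v i ≠ 0 → i ∈ S := fun i hi => by simp [hSdef, hi]
    -- bounds on gram sums
    set cA : ℝ := 1 + ((s : ℝ) - 1) * coherence A with hcA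
    set cB : ℝ := 1 + ((s : ℝ) - 1) * coherence Bᴴ with hcB
    have hcA0 : 0 ≤ cA := one_add_coh_nonneg A hA s
    have hcB0 : 0 ≤ cB := one_add_coh_nonneg Bᴴ hB s
    have hGsum : ∀ p, ∑ q ∈ S, ‖(Aᴴ * A) p q‖ ≤ cA := fun p =>
      colsum_gram_le A hA s S hScard p
    have hHsum : ∀ j, ∑ r ∈ S, ‖(B * Bᴴ) r j‖ ≤ cB := by
      intro j
      have h1 : ∀ r, ‖(B * Bᴴ) r j‖ = ‖(Bᴴᴴ * Bᴴ) j r‖ := by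
        intro r
        conv_rhs => rw [gram_norm_symm Bᴴ j r, Matrix.conjTranspose_conjTranspose]
      calc ∑ r ∈ S, ‖(B * Bᴴ) r j‖ = ∑ r ∈ S, ‖(Bᴴᴴ * Bᴴ) j r‖ :=
            Finset.sum_congr rfl fun r _ => h1 r
        _ ≤ cB := colsum_gram_le Bᴴ hB s S hScard j
    -- column sums of 1 + Wn
    have hCsum : ∀ j, ∑ p, ‖(1 + Wn) p j‖ ≤ 1 + γn := by
      intro j
      have h1 : ∑ p, ‖(1 : Matrix (Fin N) (Fin N) ℂ) p j‖ = 1 := by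
        simp [Matrix.one_apply, apply_ite (‖·‖)]
      calc ∑ p, ‖(1 + Wn) p j‖ ≤ ∑ p, (‖(1 : Matrix (Fin N) (Fin N) ℂ) p j‖ + ‖Wn p j‖) :=
            Finset.sum_le_sum fun p _ => norm_add_le _ _
        _ = 1 + ∑ p, ‖Wn p j‖ := by rw [Finset.sum_add_distrib, h1]
        _ ≤ 1 + γn := by
            have := colsum_le_matL1 Wn j
            rw [← hγn] at this
            linarith
    -- set up the matrix pieces
    set F : Matrix (Fin N) (Fin N) ℂ := E * Matrix.diagonal v with hFdef
    set H : Matrix (Fin N) (Fin N) ℂ := B * Bᴴ with hHdef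
    set G : Matrix (Fin N) (Fin N) ℂ := Aᴴ * A with hGdef
    set ME : ℝ := δ * γ / (1 - γ) with hMEdef
    have hME0 : 0 ≤ ME := by
      rw [hMEdef]
      exact div_nonneg (mul_nonneg hδ0 hγ0) (le_of_lt hγpos)
    have hFbound : ∀ q r, ‖F q r‖ ≤ ME * linf v := by
      intro q r
      rw [hFdef, Matrix.mul_diagonal, norm_mul]
      exact mul_le_mul (hME q r) (hvle r) (norm_nonneg _) hME0
    have hFsupp1 : ∀ q r, v q = 0 → F q r = 0 := by
      intro q r hq
      rw [hFdef, Matrix.mul_diagonal, hEsupp q r hq, zero_mul]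
    have hFsupp2 : ∀ q r, v r = 0 → F q r = 0 := by
      intro q r hr
      rw [hFdef, Matrix.mul_diagonal, hr, mul_zero]
    -- step a : bound on (F * H) q j
    have hstepa : ∀ q j, ‖(F * H) q j‖ ≤ ME * linf v * cB := by
      intro q j
      have hsum : (F * H) q j = ∑ r ∈ S, F q r * H r j := by
        rw [Matrix.mul_apply]
        refine (Finset.sum_subset (Finset.subset_univ S) ?_).symm
        intro r _ hr
        have hvr : v r = 0 := by
          by_contra hc
          exact hr (hmemS r hc)
        rw [hFsupp2 q r hvr, zero_mul]
      rw [hsum]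
      calc ‖∑ r ∈ S, F q r * H r j‖ ≤ ∑ r ∈ S, ‖F q r‖ * ‖H r j‖ :=
            (norm_sum_le _ _).trans (le_of_eq (by simp [norm_mul]))
        _ ≤ ∑ r ∈ S, (ME * linf v) * ‖H r j‖ := Finset.sum_le_sum fun r _ =>
            mul_le_mul_of_nonneg_right (hFbound q r) (norm_nonneg _)
        _ = (ME * linf v) * ∑ r ∈ S, ‖H r j‖ := by rw [Finset.mul_sum]
        _ ≤ ME * linf v * cB :=
            mul_le_mul_of_nonneg_left (hHsum j) (mul_nonneg hME0 hlinf0)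
    -- step b : bound on (G * (F * H)) p j
    have hstepb : ∀ p j, ‖(G * (F * H)) p j‖ ≤ cA * (ME * linf v * cB) := by
      intro p j
      have hFHsupp : ∀ q j, v q = 0 → (F * H) q j = 0 := by
        intro q j hq
        rw [Matrix.mul_apply]
        exact Finset.sum_eq_zero fun r _ => by rw [hFsupp1 q r hq, zero_mul]
      have hsum : (G * (F * H)) p j = ∑ q ∈ S, G p q * (F * H) q j := by
        rw [Matrix.mul_apply]
        refine (Finset.sum_subset (Finset.subset_univ S) ?_).symm
        intro q _ hq
        have hvq : v q = 0 := by
          by_contra hc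
          exact hq (hmemS q hc)
        rw [hFHsupp q j hvq, mul_zero]
      rw [hsum]
      calc ‖∑ q ∈ S, G p q * (F * H) q j‖ ≤ ∑ q ∈ S, ‖G p q‖ * ‖(F * H) q j‖ :=
            (norm_sum_le _ _).trans (le_of_eq (by simp [norm_mul]))
        _ ≤ ∑ q ∈ S, ‖G p q‖ * (ME * linf v * cB) := Finset.sum_le_sum fun q _ =>
            mul_le_mul_of_nonneg_left (hstepa q j) (norm_nonneg _)
        _ = (∑ q ∈ S, ‖G p q‖) * (ME * linf v * cB) := by rw [Finset.sum_mul]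
        _ ≤ cA * (ME * linf v * cB) := mul_le_mul_of_nonneg_right (hGsum p)
            (mul_nonneg (mul_nonneg hME0 hlinf0) hcB0)
    -- step c : per-diagonal-entry bound
    have hstepc : ∀ j, ‖(((1 + Wn)ᴴ * (G * (F * H))) : Matrix (Fin N) (Fin N) ℂ) j j‖ ≤
        (1 + γn) * (cA * (ME * linf v * cB)) := by
      intro j
      rw [Matrix.mul_apply]
      calc ‖∑ p, (1 + Wn)ᴴ j p * (G * (F * H)) p j‖
          ≤ ∑ p, ‖(1 + Wn) p j‖ * ‖(G * (F * H)) p j‖ := by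
            refine (norm_sum_le _ _).trans (le_of_eq ?_)
            refine Finset.sum_congr rfl fun p _ => ?_
            rw [norm_mul, Matrix.conjTranspose_apply, norm_star]
        _ ≤ ∑ p, ‖(1 + Wn) p j‖ * (cA * (ME * linf v * cB)) :=
            Finset.sum_le_sum fun p _ =>
              mul_le_mul_of_nonneg_left (hstepb p j) (norm_nonneg _)
        _ = (∑ p, ‖(1 + Wn) p j‖) * (cA * (ME * linf v * cB)) := by rw [Finset.sum_mul]
        _ ≤ (1 + γn) * (cA * (ME * linf v * cB)) := mul_le_mul_of_nonneg_right (hCsum j)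
            (mul_nonneg hcA0 (mul_nonneg (mul_nonneg hME0 hlinf0) hcB0))
    -- conclude
    have hgoalmat : (1 + Wn)ᴴ * Aᴴ * A * (X - (1 + W)) * Matrix.diagonal v * B * Bᴴ
        = (1 + Wn)ᴴ * (G * (F * H)) := by
      rw [hGdef, hFdef, hHdef, hEdef]
      simp only [Matrix.mul_assoc]
    rw [hgoalmat]
    refine ciSup_le fun j => (hstepc j).trans (le_of_eq ?_)
    rw [hMEdef]; ring

end
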